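/- Let ψ ∈ L²(X), let E_ψ = {ω ∈ Ω : Z_Γ[ψ](ω) ≠ 0}, and for g ∈ L²(X) define h_g(ω) = ⟨Z_Γ[g](ω), Z_Γ[ψ](ω)⟩ / ‖Z_Γ[ψ](ω)‖² · 1_{E_ψ}(ω). Let P be the orthogonal projection of L²(X) onto S_Γ(ψ). Then Z_Γ[Pg](ω) = h_g(ω) Z_Γ[ψ](ω) for a.e. ω ∈ Ω. -/

import Mathlib

open MeasureTheory ENNReal Filter Topology
open scoped Classical
set_option maxHeartbeats 1000000 in

/-- **Zak-transform formula for the orthogonal projection onto a principal space.**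
With `h_g(ω) = ⟨Z_Γ[g](ω), Z_Γ[ψ](ω)⟩/‖Z_Γ[ψ](ω)‖² · 1_{E_ψ}(ω)` and `P` the orthogonal
projection onto `S_Γ(ψ)` (characterized by `Pg ∈ S` and `g - Pg ⟂ S`), one has
`Z_Γ[Pg](ω) = h_g(ω) Z_Γ[ψ](ω)` for a.e. `ω`. -/
theorem zak_projection_formula {Γ X Γhat : Type*} [AddCommGroup Γ] [Countable Γ]
    [MeasurableSpace X] (μ : Measure X) [SigmaFinite μ]
    [AddCommGroup Γhat] [MeasurableSpace Γhat] (ν : Measure Γhat) [IsProbabilityMeasure ν]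
    (p : Γ → Γhat → ℂ)
    (hp1 : ∀ γ γ' ω, p (γ + γ') ω = p γ ω * p γ' ω)
    (hpmeas : ∀ γ, Measurable (p γ))
    (hpnorm : ∀ γ ω, ‖p γ ω‖ = 1)
    (htotal : ∀ F : Γhat → ℂ, Integrable F ν →
      (∀ γ : Γ, ∫ ω, F ω * p γ ω ∂ν = 0) → F =ᵐ[ν] 0)
    (Pi : Γ → (Lp ℂ 2 μ ≃ₗᵢ[ℂ] Lp ℂ 2 μ))
    (hPi : ∀ γ γ' f, Pi γ (Pi γ' f) = Pi (γ + γ') f)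
    (CΓ : Set X)
    (Z : Lp ℂ 2 μ ≃ₗᵢ[ℂ] Lp (Lp ℂ 2 (μ.restrict CΓ)) 2 ν)
    (hZ : ∀ (γ : Γ) (f : Lp ℂ 2 μ), ∀ᵐ ω ∂ν,
      (Z (Pi γ f) : Γhat → Lp ℂ 2 (μ.restrict CΓ)) ω
        = p γ ω • (Z f : Γhat → Lp ℂ 2 (μ.restrict CΓ)) ω)
    (ψ : Lp ℂ 2 μ)
    (S : Submodule ℂ (Lp ℂ 2 μ))
    (hS : S = (Submodule.span ℂ {g | ∃ γ : Γ, g = Pi γ ψ}).topologicalClosure)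
    -- the function `h_g`, vanishing off `E_ψ = {ω : Z_Γ[ψ](ω) ≠ 0}`
    (hg : Lp ℂ 2 μ → Γhat → ℂ)
    (hhg : ∀ g ω, hg g ω =
      if (Z ψ : Γhat → Lp ℂ 2 (μ.restrict CΓ)) ω = 0 then 0
      else (@inner ℂ _ _ ((Z ψ : Γhat → Lp ℂ 2 (μ.restrict CΓ)) ω)
              ((Z g : Γhat → Lp ℂ 2 (μ.restrict CΓ)) ω))
            / ((‖(Z ψ : Γhat → Lp ℂ 2 (μ.restrict CΓ)) ω‖ : ℂ) ^ 2)) :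
    ∀ g Pg : Lp ℂ 2 μ, Pg ∈ S → g - Pg ∈ Sᗮ →
      ∀ᵐ ω ∂ν, (Z Pg : Γhat → Lp ℂ 2 (μ.restrict CΓ)) ω
        = hg g ω • (Z ψ : Γhat → Lp ℂ 2 (μ.restrict CΓ)) ω := by
  classical
  set H := Lp ℂ 2 (μ.restrict CΓ) with hH
  -- basic facts about the character family `p`
  have hpne : ∀ γ ω, p γ ω ≠ 0 := by
    intro γ ω h
    have := hpnorm γ ω
    rw [h] at this; simp at this
  have hp0 : ∀ ω, p 0 ω = 1 := by
    intro ω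
    have h := hp1 0 0 ω
    rw [add_zero] at h
    have h' : p 0 ω * 1 = p 0 ω * p 0 ω := by rw [mul_one]; exact h
    exact (mul_left_cancel₀ (hpne 0 ω) h').symm
  have hpconj : ∀ γ ω, (starRingEnd ℂ) (p γ ω) = p (-γ) ω := by
    intro γ ω
    have h1 : p (-γ) ω * p γ ω = 1 := by rw [← hp1, neg_add_cancel, hp0]
    have h2 : (starRingEnd ℂ) (p γ ω) * p γ ω = 1 := by
      rw [mul_comm, Complex.mul_conj]
      norm_cast
      rw [Complex.normSq_eq_norm_sq, hpnorm]
      norm_num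
    exact mul_right_cancel₀ (hpne γ ω) (h2.trans h1.symm)
  -- the candidate closed subspace
  let N : Submodule ℂ (Lp ℂ 2 μ) :=
    { carrier := {f | ∀ᵐ ω ∂ν, (Z f : Γhat → H) ω = hg f ω • (Z ψ : Γhat → H) ω}
      add_mem' := by
        intro f f' hf hf'
        have hadd : ⇑(Z (f + f')) =ᵐ[ν] ⇑(Z f) + ⇑(Z f') := by
          rw [map_add]; exact Lp.coeFn_add _ _
        filter_upwards [hf, hf', hadd] with ω h1 h2 h3
        have h3' : (Z (f + f') : Γhat → H) ω = (Z f : Γhat → H) ω + (Z f' : Γhat → H) ω := h3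
        by_cases hψ : (Z ψ : Γhat → H) ω = 0
        · rw [h3', h1, h2, hψ]; simp
        · rw [h3', h1, h2, hhg (f + f'), if_neg hψ, h3', inner_add_right, add_div, add_smul,
            hhg f, hhg f', if_neg hψ, if_neg hψ]
      zero_mem' := by
        have h0 : ⇑(Z (0 : Lp ℂ 2 μ)) =ᵐ[ν] 0 := by rw [map_zero]; exact Lp.coeFn_zero _ _ _
        filter_upwards [h0] with ω hω
        have hω' : (Z (0 : Lp ℂ 2 μ) : Γhat → H) ω = 0 := hω
        rw [hω', hhg 0]
        by_cases hψ : (Z ψ : Γhat → H) ω = 0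
        · simp [hψ]
        · rw [if_neg hψ, hω']; simp
      smul_mem' := by
        intro c f hf
        have hs : ⇑(Z (c • f)) =ᵐ[ν] c • ⇑(Z f) := by
          rw [_root_.map_smul]; exact Lp.coeFn_smul _ _
        filter_upwards [hf, hs] with ω h1 h2
        have h2' : (Z (c • f) : Γhat → H) ω = c • (Z f : Γhat → H) ω := h2
        by_cases hψ : (Z ψ : Γhat → H) ω = 0
        · rw [h2', h1, hψ]; simp
        · rw [h2', h1, hhg (c • f), if_neg hψ, h2', inner_smul_right, mul_div_assoc,
            hhg f, if_neg hψ, smul_smul] }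
  -- N is closed
  have hNclosed : IsClosed (N : Set (Lp ℂ 2 μ)) := by
    apply IsSeqClosed.isClosed
    intro fseq f hmem hlim
    have hZt : Tendsto (fun n => Z (fseq n)) atTop (𝓝 (Z f)) :=
      (Z.continuous.tendsto f).comp hlim
    have help : Tendsto (fun n => eLpNorm (⇑(Z (fseq n)) - ⇑(Z f)) 2 ν) atTop (𝓝 0) :=
      (Lp.tendsto_Lp_iff_tendsto_eLpNorm' (fun n => Z (fseq n)) (Z f)).mp hZt
    have hmeasconv : TendstoInMeasure ν (fun n => ⇑(Z (fseq n))) atTop ⇑(Z f) :=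
      tendstoInMeasure_of_tendsto_eLpNorm two_ne_zero
        (fun n => Lp.aestronglyMeasurable _) (Lp.aestronglyMeasurable _) help
    obtain ⟨ns, _, hae⟩ := hmeasconv.exists_seq_tendsto_ae
    have hall : ∀ᵐ ω ∂ν, ∀ k,
        (Z (fseq (ns k)) : Γhat → H) ω = hg (fseq (ns k)) ω • (Z ψ : Γhat → H) ω :=
      ae_all_iff.mpr fun k => hmem (ns k)
    filter_upwards [hae, hall] with ω hω1 hω2
    by_cases hψ : (Z ψ : Γhat → H) ω = 0
    · have hz : ∀ k, (Z (fseq (ns k)) : Γhat → H) ω = 0 := by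
        intro k; rw [hω2 k, hψ, smul_zero]
      have h0 : Tendsto (fun k => (Z (fseq (ns k)) : Γhat → H) ω) atTop (𝓝 0) := by
        simp only [hz]; exact tendsto_const_nhds
      have := tendsto_nhds_unique hω1 h0
      rw [this, hψ, smul_zero]
    · have hinner : Tendsto (fun k => (inner ℂ ((Z ψ : Γhat → H) ω)
          ((Z (fseq (ns k)) : Γhat → H) ω) : ℂ)) atTop
          (𝓝 (inner ℂ ((Z ψ : Γhat → H) ω) ((Z f : Γhat → H) ω))) :=
        Tendsto.inner tendsto_const_nhds hω1
      have hc : Tendsto (fun k => hg (fseq (ns k)) ω) atTop (𝓝 (hg f ω)) := by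
        simp only [hhg, if_neg hψ]
        exact hinner.div_const _
      have hlim2 : Tendsto (fun k => hg (fseq (ns k)) ω • (Z ψ : Γhat → H) ω) atTop
          (𝓝 (hg f ω • (Z ψ : Γhat → H) ω)) := hc.smul tendsto_const_nhds
      have hlim2' : Tendsto (fun k => (Z (fseq (ns k)) : Γhat → H) ω) atTop
          (𝓝 (hg f ω • (Z ψ : Γhat → H) ω)) := by
        simpa only [← hω2] using hlim2
      exact tendsto_nhds_unique hω1 hlim2'
  -- generators belong to N
  have hgen : {g | ∃ γ : Γ, g = Pi γ ψ} ⊆ (N : Set (Lp ℂ 2 μ)) := by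
    rintro _ ⟨γ, rfl⟩
    filter_upwards [hZ γ ψ] with ω hω
    by_cases hψ : (Z ψ : Γhat → H) ω = 0
    · rw [hω, hψ, smul_zero, hhg, if_pos hψ, zero_smul]
    · have hn : ((‖(Z ψ : Γhat → H) ω‖ : ℂ)) ^ 2 ≠ 0 := by
        exact pow_ne_zero 2 (Complex.ofReal_ne_zero.mpr (norm_ne_zero_iff.mpr hψ))
      have hsq : (inner ℂ ((Z ψ : Γhat → H) ω) ((Z ψ : Γhat → H) ω) : ℂ)
          = ((‖(Z ψ : Γhat → H) ω‖ : ℂ)) ^ 2 := by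
        rw [inner_self_eq_norm_sq_to_K]; norm_cast
      rw [hω, hhg, if_neg hψ, hω, inner_smul_right, hsq,
        mul_div_assoc, div_self hn, mul_one]
  -- S ≤ N
  have hSle : S ≤ N := by
    rw [hS]
    exact Submodule.topologicalClosure_minimal _ (Submodule.span_le.mpr hgen) hNclosed
  intro g Pg hPgS hperp
  have hPgN : ∀ᵐ ω ∂ν, (Z Pg : Γhat → H) ω = hg Pg ω • (Z ψ : Γhat → H) ω := hSle hPgS
  -- the bracket of the defect vanishes
  set D := g - Pg with hD
  have hDZ : ⇑(Z D) =ᵐ[ν] ⇑(Z g) - ⇑(Z Pg) := by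
    rw [hD, map_sub]; exact Lp.coeFn_sub _ _
  set F : Γhat → ℂ := fun ω => inner ℂ ((Z ψ : Γhat → H) ω) ((Z D : Γhat → H) ω) with hF
  have hFint : Integrable F ν := L2.integrable_inner (𝕜 := ℂ) (Z ψ) (Z D)
  have hForth : ∀ γ : Γ, ∫ ω, F ω * p γ ω ∂ν = 0 := by
    intro γ
    have hmem : Pi (-γ) ψ ∈ S := by
      rw [hS]
      exact Submodule.le_topologicalClosure _ (Submodule.subset_span ⟨-γ, rfl⟩)
    have h0 : (inner ℂ (Pi (-γ) ψ) D : ℂ) = 0 :=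
      (Submodule.mem_orthogonal S D).mp hperp _ hmem
    have h1 : (inner ℂ (Z (Pi (-γ) ψ)) (Z D) : ℂ) = 0 := by
      rw [Z.inner_map_map]; exact h0
    rw [L2.inner_def] at h1
    have heq : ∫ ω, F ω * p γ ω ∂ν
        = ∫ ω, (inner ℂ ((Z (Pi (-γ) ψ) : Γhat → H) ω) ((Z D : Γhat → H) ω) : ℂ) ∂ν := by
      apply integral_congr_ae
      filter_upwards [hZ (-γ) ψ] with ω hω
      rw [hω, inner_smul_left, hpconj (-γ), neg_neg, hF, mul_comm]
    rw [heq, h1]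
  have hF0 : F =ᵐ[ν] 0 := htotal F hFint hForth
  -- conclude
  filter_upwards [hPgN, hF0, hDZ] with ω h1 h2 h3
  have h3' : (Z D : Γhat → H) ω = (Z g : Γhat → H) ω - (Z Pg : Γhat → H) ω := h3
  have h2' : (inner ℂ ((Z ψ : Γhat → H) ω) ((Z D : Γhat → H) ω) : ℂ) = 0 := h2
  have hinner_eq : (inner ℂ ((Z ψ : Γhat → H) ω) ((Z g : Γhat → H) ω) : ℂ)
      = inner ℂ ((Z ψ : Γhat → H) ω) ((Z Pg : Γhat → H) ω) := by
    have := h2'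
    rw [h3', inner_sub_right, sub_eq_zero] at this
    exact this
  rw [h1]
  congr 1
  rw [hhg g, hhg Pg]
  by_cases hψ : (Z ψ : Γhat → H) ω = 0
  · simp [hψ]
  · rw [if_neg hψ, if_neg hψ, hinner_eq]
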